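/- If y ∈ [0, 2/3] is a dyadic rational (y = k/2^n for some integers k, n ≥ 0), then the level set L(y) is countable. -/

import Mathlib

open Set MeasureTheory ENNReal

/-- `phi x` is the distance from `x` to the nearest integer. -/
noncomputable def phi (x : ℝ) : ℝ := |x - (round x : ℤ)|

/-- The Takagi function. -/
noncomputable def T (x : ℝ) : ℝ := ∑' n : ℕ, phi (2 ^ n * x) / 2 ^ n

/-- The `n`-th binary digit of `x` (terminating expansion for dyadic rationals). -/
noncomputable def eps (n : ℕ) (x : ℝ) : ℤ := ⌊2 ^ n * x⌋ - 2 * ⌊2 ^ (n - 1) * x⌋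

/-- `D k x = ∑_{j=1}^k (-1)^{ε_j(x)}`, the excess of 0 digits over 1 digits. -/
noncomputable def D (k : ℕ) (x : ℝ) : ℤ := ∑ j ∈ Finset.Icc 1 k, (1 - 2 * eps j x)

/-- The level set of the Takagi function at level `y`. -/
def L (y : ℝ) : Set ℝ := {x | x ∈ Set.Icc (0:ℝ) 1 ∧ T x = y}

/-- `x` is a balanced dyadic rational of order `m`. -/
def BalancedOfOrder (x : ℝ) (m : ℕ) : Prop :=
  x ∈ Set.Ico (0:ℝ) 1 ∧ (∃ k : ℤ, x = (k : ℝ) / 2 ^ (2 * m)) ∧ D (2 * m) x = 0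

/-- The generation of a balanced dyadic rational of order `m`:
the number of indices `1 ≤ j ≤ 2m` with `D j x = 0`. -/
noncomputable def generation (x : ℝ) (m : ℕ) : ℕ :=
  ((Finset.Icc 1 (2 * m)).filter (fun j => D j x = 0)).card

/-- A balanced dyadic rational of order `m` is leading if `D j x ≥ 0` for all `1 ≤ j ≤ 2m`. -/
def Leading (x : ℝ) (m : ℕ) : Prop := ∀ j ∈ Finset.Icc 1 (2 * m), 0 ≤ D j x

/-- The equivalence relation whose classes are the local level sets. -/
def locSetoid : Setoid ℝ where
  r x x' := ∀ n : ℕ, 1 ≤ n → |D n x| = |D n x'|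
  iseqv := ⟨fun _ _ _ => rfl, fun h n hn => (h n hn).symm,
    fun h g n hn => (h n hn).trans (g n hn)⟩

/-- The set of local level sets contained in `L y`: the image of `L y ∩ [0,1)`
under the quotient map of `locSetoid`. -/
def locClasses (y : ℝ) : Set (Quotient locSetoid) :=
  Quotient.mk locSetoid '' (L y ∩ Set.Ico (0:ℝ) 1)



lemma phi_nonneg (x : ℝ) : 0 ≤ phi x := abs_nonneg _

lemma phi_le_half (x : ℝ) : phi x ≤ 1/2 := by
  simpa [phi] using abs_sub_round x

lemma phi_le (x : ℝ) (k : ℤ) : phi x ≤ |x - k| := by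
  rcases eq_or_ne k (round x) with h | h
  · simp [phi, h]
  · have h1 : (1 : ℝ) ≤ |(k : ℝ) - round x| := by
      have h0 : (0:ℤ) < |k - round x| := abs_pos.mpr (sub_ne_zero.mpr h)
      have : (1:ℤ) ≤ |k - round x| := h0
      calc (1:ℝ) ≤ ((|k - round x| : ℤ) : ℝ) := by exact_mod_cast this
        _ = |(k : ℝ) - round x| := by push_cast [Int.cast_abs]; ring_nf
    have h2 : |(k:ℝ) - round x| ≤ |x - k| + |x - round x| := by
      have := abs_sub_abs_le_abs_sub ((k:ℝ) - x) ((round x : ℝ) - x)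
      calc |(k:ℝ) - round x| = |((k:ℝ) - x) - ((round x : ℝ) - x)| := by ring_nf
        _ ≤ |(k:ℝ) - x| + |(round x:ℝ) - x| := abs_sub _ _
        _ = |x - k| + |x - round x| := by rw [abs_sub_comm ((k:ℝ)) x, abs_sub_comm ((round x:ℝ)) x]
    have h3 := abs_sub_round x
    have : phi x ≤ 1/2 := phi_le_half x
    have : (1:ℝ) ≤ |x - k| + 1/2 := le_trans h1 (le_trans h2 (by linarith [abs_sub_round x]))
    linarith [phi_le_half x]

lemma phi_add_int (x : ℝ) (k : ℤ) : phi (x + k) = phi x := by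
  simp only [phi, round_add_intCast]
  push_cast
  ring_nf

lemma phi_two_mul (x : ℝ) : phi (2 * x) ≤ 1 - 2 * phi x := by
  rcases le_or_gt (round x : ℝ) x with h | h
  · have := phi_le (2*x) (2 * round x + 1)
    have hd : x - round x ≤ 1/2 := by
      have := abs_sub_round x; rw [abs_le] at this; exact this.2
    have hphi : phi x = x - round x := by
      rw [phi, abs_of_nonneg]; linarith
    rw [hphi]
    have : |2*x - ((2 * round x + 1 : ℤ) : ℝ)| = 1 - 2*(x - round x) := by
      push_cast
      rw [abs_of_nonpos (by linarith)]; ring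
    linarith [phi_le (2*x) (2 * round x + 1), this ▸ phi_le (2*x) (2 * round x + 1)]
  · have hd : (round x : ℝ) - x ≤ 1/2 := by
      have := abs_sub_round x; rw [abs_le] at this; linarith [this.1]
    have hphi : phi x = (round x : ℝ) - x := by
      rw [phi, abs_of_nonpos]; ring_nf; linarith
    rw [hphi]
    have h2 : |2*x - ((2 * round x - 1 : ℤ) : ℝ)| = 1 - 2*((round x:ℝ) - x) := by
      push_cast
      rw [abs_of_nonneg (by linarith)]; ring
    linarith [h2 ▸ phi_le (2*x) (2 * round x - 1)]

lemma summable_phi (x : ℝ) : Summable (fun n : ℕ => phi (2 ^ n * x) / 2 ^ n) := by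
  apply Summable.of_nonneg_of_le
    (fun n => div_nonneg (phi_nonneg _) (by positivity))
    (fun n => ?_)
    ((summable_geometric_of_lt_one (by norm_num) (by norm_num : (1/2:ℝ) < 1)).mul_left (1/2))
  have h := phi_le_half (2 ^ n * x)
  have h2 : ((1:ℝ)/2) * (1/2)^n = (1/2) / 2^n := by
    rw [div_pow, one_pow]; ring
  rw [h2]
  exact div_le_div_of_nonneg_right h (by positivity) |>.trans_eq rfl

lemma T_nonneg (x : ℝ) : 0 ≤ T x :=
  tsum_nonneg fun n => div_nonneg (phi_nonneg _) (by positivity)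

lemma T_le_one (x : ℝ) : T x ≤ 1 := by
  have h : T x ≤ ∑' n : ℕ, ((1:ℝ)/2) * (1/2)^n := by
    apply Summable.tsum_le_tsum _ (summable_phi x)
      ((summable_geometric_of_lt_one (by norm_num) (by norm_num : (1/2:ℝ) < 1)).mul_left (1/2))
    intro n
    have h2 : ((1:ℝ)/2) * (1/2)^n = (1/2) / 2^n := by rw [div_pow, one_pow]; ring
    rw [h2]
    exact div_le_div_of_nonneg_right (phi_le_half _) (by positivity)
  have h3 : ∑' n : ℕ, ((1:ℝ)/2) * (1/2)^n = 1 := by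
    rw [tsum_mul_left, tsum_geometric_of_lt_one (by norm_num) (by norm_num : (1/2:ℝ) < 1)]
    norm_num
  linarith

lemma T_fe (x : ℝ) : T x = phi x + T (2 * x) / 2 := by
  have h := Summable.tsum_eq_zero_add (summable_phi x)
  rw [T, h]
  congr 1
  · simp
  · have : ∀ n : ℕ, phi (2 ^ (n+1) * x) / 2 ^ (n+1) = (phi (2^n * (2*x)) / 2^n) / 2 := by
      intro n
      rw [pow_succ]
      ring_nf
    rw [tsum_congr this, tsum_div_const]
    rfl

lemma T_add_int (x : ℝ) (k : ℤ) : T (x + k) = T x := by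
  unfold T
  apply tsum_congr
  intro n
  congr 1
  have : (2:ℝ) ^ n * (x + k) = 2^n * x + ((2^n * k : ℤ) : ℝ) := by push_cast; ring
  rw [this, phi_add_int]

lemma T_le : T x ≤ 3/4 := by
  have h1 := T_fe x
  have h2 := T_fe (2 * x)
  have h3 : T (2 * (2 * x)) ≤ 1 := T_le_one _
  have h4 := phi_two_mul x
  have h5 := phi_nonneg x
  linarith

lemma phi_of_lt_half {x : ℝ} (h0 : 0 ≤ x) (h : x < 1/2) : phi x = x := by
  have hr : round x = 0 := by
    rw [round_eq]
    apply Int.floor_eq_zero_iff.mpr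
    constructor <;> simp <;> linarith
  rw [phi, hr, abs_of_nonneg] <;> simp [h0]

lemma phi_of_ge_half {x : ℝ} (h0 : 1/2 ≤ x) (h : x < 1) : phi x = 1 - x := by
  have hr : round x = 1 := by
    rw [round_eq]
    have : ⌊x + 1/2⌋ = 1 := by
      apply Int.floor_eq_iff.mpr <;> norm_num <;> constructor <;> linarith
    exact this
  rw [phi, hr]
  rw [abs_of_nonpos (by push_cast; linarith)]
  push_cast; ring

/-- digit n of x is 0 -/
def dig (n : ℕ) (x : ℝ) : Prop := Int.fract (2 ^ n * x) < 1/2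

noncomputable instance (n : ℕ) (x : ℝ) : Decidable (dig n x) := Real.decidableLT _ _

noncomputable def sD : ℕ → ℝ → ℤ
  | 0, _ => 0
  | n+1, x => sD n x + (if dig n x then 1 else -1)

noncomputable def mD : ℕ → ℝ → ℤ
  | 0, _ => 0
  | n+1, x => 2 * mD n x + (if dig n x then 0 else sD n x + 1)

lemma fract_pow_succ (n : ℕ) (x : ℝ) :
    Int.fract (2 ^ (n+1) * x) = 2 * Int.fract (2 ^ n * x) - (if dig n x then 0 else 1) := by
  have key : (2:ℝ) ^ (n+1) * x = (2 * ⌊2 ^ n * x⌋ : ℤ) + 2 * Int.fract (2 ^ n * x) := by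
    rw [Int.fract]; push_cast; ring
  rw [key, Int.fract_intCast_add]
  have h0 := Int.fract_nonneg (2 ^ n * x)
  have h1 := Int.fract_lt_one (2 ^ n * x)
  by_cases h : dig n x
  · rw [if_pos h]
    rw [Int.fract_eq_self.mpr ⟨by linarith, by unfold dig at h; linarith⟩]
    ring
  · rw [if_neg h]
    unfold dig at h; push_neg at h
    have : 2 * Int.fract (2 ^ n * x) = (2 * Int.fract (2 ^ n * x) - 1) + ((1:ℤ):ℝ) := by
      push_cast; ring
    rw [this, Int.fract_add_intCast, Int.fract_eq_self.mpr ⟨by linarith, by linarith⟩]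
    push_cast; ring

lemma floor_pow_succ (n : ℕ) (x : ℝ) :
    ⌊(2:ℝ) ^ (n+1) * x⌋ = 2 * ⌊(2:ℝ) ^ n * x⌋ + (if dig n x then 0 else 1) := by
  have key : (2:ℝ) ^ (n+1) * x = 2 * Int.fract (2 ^ n * x) + ((2 * ⌊2 ^ n * x⌋ : ℤ) : ℝ) := by
    rw [Int.fract]; push_cast; ring
  rw [key, Int.floor_add_intCast]
  have h0 := Int.fract_nonneg (2 ^ n * x)
  have h1 := Int.fract_lt_one (2 ^ n * x)
  by_cases h : dig n x
  · rw [if_pos h]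
    unfold dig at h
    rw [Int.floor_eq_zero_iff.mpr ⟨by linarith, by linarith⟩]
    ring
  · rw [if_neg h]
    unfold dig at h; push_neg at h
    have : ⌊2 * Int.fract (2 ^ n * x)⌋ = 1 := by
      apply Int.floor_eq_iff.mpr <;> norm_num <;> constructor <;> linarith
    omega

lemma dig_iff_floor (n : ℕ) (x : ℝ) :
    dig n x ↔ ⌊(2:ℝ) ^ (n+1) * x⌋ = 2 * ⌊(2:ℝ) ^ n * x⌋ := by
  rw [floor_pow_succ]
  by_cases h : dig n x <;> simp [h]

lemma master (x : ℝ) (hx : x ∈ Ico (0:ℝ) 1) : ∀ n : ℕ,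
    T (Int.fract (2 ^ n * x)) + (sD n x : ℝ) * Int.fract (2 ^ n * x)
      = 2 ^ n * T x - (mD n x : ℝ) := by
  intro n
  induction n with
  | zero =>
    simp [sD, mD, Int.fract_eq_self.mpr ⟨hx.1, hx.2⟩]
  | succ n ih =>
    set η := Int.fract (2 ^ n * x) with hη
    have h0 : 0 ≤ η := Int.fract_nonneg _
    have h1 : η < 1 := Int.fract_lt_one _
    have hfe : T η = phi η + T (2 * η) / 2 := T_fe η
    have hfr := fract_pow_succ n x
    by_cases h : dig n x
    · have hφ : phi η = η := phi_of_lt_half h0 (by unfold dig at h; exact h)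
      rw [fract_pow_succ, if_pos h] at *
      simp only [sD, mD, if_pos h]
      have hT2 : T (2 * η - 0) = 2 * T η - 2 * η := by
        rw [sub_zero]; rw [hfe, hφ]; ring
      rw [hT2]
      push_cast
      rw [pow_succ]
      nlinarith [ih]
    · have hge : 1/2 ≤ η := by unfold dig at h; linarith [not_lt.mp h]
      have hφ : phi η = 1 - η := phi_of_ge_half hge h1
      rw [fract_pow_succ, if_neg h] at *
      simp only [sD, mD, if_neg h]
      have hT2 : T (2 * η - 1) = T (2 * η) := by
        have := T_add_int (2 * η - 1) 1
        simp at this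
        rw [← this]
      have hT2' : T (2 * η) = 2 * T η - 2 * (1 - η) := by rw [hfe, hφ]; ring
      rw [hT2, hT2']
      push_cast
      rw [pow_succ]
      nlinarith [ih]

/-- alive region for integer states -/
def RR (S C : ℤ) : Prop :=
  (1 ≤ S ∧ 0 ≤ C ∧ C ≤ S) ∨ (S = 0 ∧ C = 0) ∨ (S ≤ -1 ∧ S + 1 ≤ C ∧ C ≤ 0)

/-- integer c-value of the state at time n (valid for n ≥ N) -/
noncomputable def CD (N : ℕ) (K : ℤ) (n : ℕ) (x : ℝ) : ℤ := 2 ^ (n - N) * K - mD n x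

def Branch (N : ℕ) (K : ℤ) (x : ℝ) (m : ℕ) : Prop :=
  RR (sD m x + 1) (2 * CD N K m x) ∧ RR (sD m x - 1) (2 * CD N K m x - sD m x - 1)

section Level

variable {y : ℝ} {N : ℕ} {K : ℤ}

lemma CD_cast (hK : (K : ℝ) = 2 ^ N * y) {n : ℕ} (hn : N ≤ n) (x : ℝ) :
    ((CD N K n x : ℤ) : ℝ) = 2 ^ n * y - (mD n x : ℝ) := by
  unfold CD
  push_cast
  rw [hK]
  rw [← mul_assoc, ← pow_add]
  congr 3
  omega

lemma state_eq (hK : (K : ℝ) = 2 ^ N * y) {n : ℕ} (hn : N ≤ n) {x : ℝ} (hx : x ∈ Ico (0:ℝ) 1) (hT : T x = y) :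
    ((CD N K n x : ℤ) : ℝ) = T (Int.fract (2 ^ n * x)) + (sD n x : ℝ) * Int.fract (2 ^ n * x) := by
  rw [CD_cast hK hn, master x hx n, hT]

lemma realized (hK : (K : ℝ) = 2 ^ N * y) {n : ℕ} (hn : N ≤ n) {x : ℝ} (hx : x ∈ Ico (0:ℝ) 1) (hT : T x = y) :
    RR (sD n x) (CD N K n x) := by
  set η := Int.fract (2 ^ n * x) with hη
  have h0 : 0 ≤ η := Int.fract_nonneg _
  have h1 : η < 1 := Int.fract_lt_one _
  have hT0 : 0 ≤ T η := T_nonneg η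
  have hT1 : T η ≤ 3/4 := T_le
  have hs := state_eq hK hn hx hT
  set S := sD n x with hS
  set C := CD N K n x with hC
  rcases lt_trichotomy S 0 with h | h | h
  · right; right
    refine ⟨by omega, ?_, ?_⟩
    · have : (S:ℝ) < (C:ℝ) := by
        have hSneg : (S:ℝ) < 0 := by exact_mod_cast h
        have hSη : (S:ℝ) * η > (S:ℝ) := by nlinarith
        nlinarith
      have : S < C := by exact_mod_cast this
      omega
    · have hSneg : (S:ℝ) < 0 := by exact_mod_cast h
      have : (C:ℝ) ≤ 3/4 := by nlinarith
      have : (C:ℝ) < 1 := by linarith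
      have : C < 1 := by exact_mod_cast this
      omega
  · right; left
    refine ⟨h, ?_⟩
    have hS0 : (S:ℝ) = 0 := by exact_mod_cast h
    have hub : (C:ℝ) < 1 := by rw [hs, hS0]; linarith
    have hlb : (0:ℝ) ≤ (C:ℝ) := by rw [hs, hS0]; linarith
    have h1' : C < 1 := by exact_mod_cast hub
    have h2' : 0 ≤ C := by exact_mod_cast hlb
    omega
  · left
    refine ⟨by omega, ?_, ?_⟩
    · have hlb : (0:ℝ) ≤ (C:ℝ) := by
        rw [hs]
        have : (0:ℝ) ≤ (S:ℝ) * η := by positivity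
        linarith
      exact_mod_cast hlb
    · have hub : (C:ℝ) < (S:ℝ) + 1 := by
        rw [hs]
        have hSc : (0:ℝ) < (S:ℝ) := by exact_mod_cast h
        nlinarith
      have : C < S + 1 := by exact_mod_cast hub
      omega

lemma CD_succ {n : ℕ} (hn : N ≤ n) (x : ℝ) :
    CD N K (n+1) x = 2 * CD N K n x - (if dig n x then 0 else sD n x + 1) := by
  have hm : mD (n+1) x = 2 * mD n x + (if dig n x then 0 else sD n x + 1) := rfl
  unfold CD
  rw [hm]
  have h2 : n + 1 - N = (n - N) + 1 := by omega
  rw [h2, pow_succ]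
  ring

lemma sD_succ (n : ℕ) (x : ℝ) :
    sD (n+1) x = sD n x + (if dig n x then 1 else -1) := rfl

end Level

lemma dig_eq_of_floors {x x' : ℝ} {m : ℕ}
    (h : ∀ j ≤ m, ⌊(2:ℝ) ^ j * x⌋ = ⌊(2:ℝ) ^ j * x'⌋) {j : ℕ} (hj : j + 1 ≤ m) :
    (dig j x ↔ dig j x') := by
  rw [dig_iff_floor, dig_iff_floor, h j (by omega), h (j+1) (by omega)]

lemma states_eq_of_floors {x x' : ℝ} {m : ℕ}
    (h : ∀ j ≤ m, ⌊(2:ℝ) ^ j * x⌋ = ⌊(2:ℝ) ^ j * x'⌋) :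
    ∀ j ≤ m, sD j x = sD j x' ∧ mD j x = mD j x' := by
  intro j hj
  induction j with
  | zero => exact ⟨rfl, rfl⟩
  | succ i ih =>
    have hi := ih (by omega)
    have hd : dig i x ↔ dig i x' := dig_eq_of_floors h (by omega)
    constructor
    · show sD i x + _ = sD i x' + _
      rw [hi.1]
      congr 1
      by_cases hdd : dig i x
      · rw [if_pos hdd, if_pos (hd.mp hdd)]
      · rw [if_neg hdd, if_neg (fun c => hdd (hd.mpr c))]
    · show 2 * mD i x + _ = 2 * mD i x' + _
      rw [hi.1, hi.2]
      congr 1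
      by_cases hdd : dig i x
      · rw [if_pos hdd, if_pos (hd.mp hdd)]
      · rw [if_neg hdd, if_neg (fun c => hdd (hd.mpr c))]

lemma eq_of_all_floors {x x' : ℝ}
    (h : ∀ j : ℕ, ⌊(2:ℝ) ^ j * x⌋ = ⌊(2:ℝ) ^ j * x'⌋) : x = x' := by
  by_contra hne
  have habs : 0 < |x - x'| := abs_pos.mpr (sub_ne_zero.mpr hne)
  obtain ⟨j, hj⟩ := exists_pow_lt_of_lt_one habs (by norm_num : (1/2:ℝ) < 1)
  have h2 : ((1:ℝ)/2) ^ j = 1 / 2 ^ j := by rw [div_pow, one_pow]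
  rw [h2] at hj
  have hfr : 2 ^ j * x - 2 ^ j * x' = Int.fract (2^j*x) - Int.fract (2^j*x') := by
    rw [Int.fract, Int.fract, h j]; ring
  have hb1 : |2 ^ j * x - 2 ^ j * x'| < 1 := by
    rw [hfr]
    have e0 := Int.fract_nonneg (2^j*x); have e1 := Int.fract_lt_one (2^j*x)
    have f0 := Int.fract_nonneg (2^j*x'); have f1 := Int.fract_lt_one (2^j*x')
    rw [abs_lt]; constructor <;> linarith
  have : |2 ^ j * x - 2 ^ j * x'| = 2 ^ j * |x - x'| := by
    rw [← mul_sub, abs_mul, abs_of_pos (by positivity : (0:ℝ) < 2^j)]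
  rw [this] at hb1
  have hp : (0:ℝ) < 2 ^ j := by positivity
  rw [div_lt_iff₀ hp] at hj
  nlinarith

section Level2

variable {y : ℝ} {N : ℕ} {K : ℤ}

/-- points of the level set in `[0,1)` -/
def Pset (y : ℝ) : Set ℝ := {x | x ∈ Ico (0:ℝ) 1 ∧ T x = y}

/-- exit states: once the state is `(t, 0)` with `t ≥ 0`, the trajectory keeps the form
`(t+i, 0)` and never branches again. -/
lemma exit_states (hK : (K : ℝ) = 2 ^ N * y) {x : ℝ} (hx : x ∈ Pset y) {j : ℕ} (hj : N ≤ j)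
    (hs : 0 ≤ sD j x) (hc : CD N K j x = 0) :
    ∀ i : ℕ, sD (j+i) x = sD j x + i ∧ CD N K (j+i) x = 0 := by
  intro i
  induction i with
  | zero => simp [hc]
  | succ i ih =>
    have hji : N ≤ j + i := by omega
    have hR := realized hK (show N ≤ j + i + 1 by omega) hx.1 hx.2
    have hCs := CD_succ (K := K) (x := x) hji
    have hss := sD_succ (j+i) x
    by_cases hd : dig (j+i) x
    · rw [if_pos hd] at hCs hss
      have : j + (i+1) = (j + i) + 1 := by omega
      rw [this, hss, hCs, ih.1, ih.2]
      constructor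
      · push_cast; ring
      · ring
    · rw [if_neg hd] at hCs hss
      exfalso
      have hstate : sD ((j+i)+1) x = sD j x + i - 1 ∧
          CD N K ((j+i)+1) x = - (sD j x + i) - 1 := by
        rw [hss, hCs, ih.1, ih.2]
        constructor
        · push_cast; ring
        · push_cast; ring
      have : j + i + 1 = (j+i) + 1 := rfl
      rw [hstate.1, hstate.2] at hR
      unfold RR at hR
      omega

lemma exit_noBranch (hK : (K : ℝ) = 2 ^ N * y) {x : ℝ} (hx : x ∈ Pset y) {j : ℕ} (hj : N ≤ j)
    (hs : 0 ≤ sD j x) (hc : CD N K j x = 0) :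
    ∀ m, j ≤ m → ¬ Branch N K x m := by
  intro m hm hB
  obtain ⟨i, rfl⟩ := Nat.exists_eq_add_of_le hm
  have hst := exit_states hK hx hj hs hc i
  unfold Branch RR at hB
  rw [hst.1, hst.2] at hB
  omega

end Level2

section Level3

variable {y : ℝ} {N : ℕ} {K : ℤ}

lemma first_diff {x x' : ℝ} (hne : x ≠ x') {n : ℕ}
    (hagree : ∀ j ≤ n, ⌊(2:ℝ) ^ j * x⌋ = ⌊(2:ℝ) ^ j * x'⌋) :
    ∃ m, n ≤ m ∧ (∀ j ≤ m, ⌊(2:ℝ) ^ j * x⌋ = ⌊(2:ℝ) ^ j * x'⌋) ∧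
      ¬ (dig m x ↔ dig m x') := by
  classical
  have hex : ∃ j : ℕ, ⌊(2:ℝ) ^ j * x⌋ ≠ ⌊(2:ℝ) ^ j * x'⌋ := by
    by_contra hc
    push_neg at hc
    exact hne (eq_of_all_floors hc)
  have hj₀ := Nat.find_spec hex
  have hj₀n : n < Nat.find hex := by
    rcases Nat.lt_or_ge n (Nat.find hex) with h | h
    · exact h
    · exact absurd (hagree _ h) hj₀
  obtain ⟨m, hmeq⟩ : ∃ m, Nat.find hex = m + 1 := ⟨Nat.find hex - 1, by omega⟩
  have hmin : ∀ j ≤ m, ⌊(2:ℝ) ^ j * x⌋ = ⌊(2:ℝ) ^ j * x'⌋ := by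
    intro j hj
    exact not_ne_iff.mp (Nat.find_min hex (by omega))
  refine ⟨m, by omega, hmin, fun hiff => ?_⟩
  apply hj₀
  rw [hmeq, floor_pow_succ, floor_pow_succ, hmin m le_rfl]
  by_cases hd : dig m x
  · rw [if_pos hd, if_pos (hiff.mp hd)]
  · rw [if_neg hd, if_neg (fun c => hd (hiff.mpr c))]

lemma branch_at_diff (hK : (K : ℝ) = 2 ^ N * y) {x x' : ℝ}
    (hx : x ∈ Pset y) (hx' : x' ∈ Pset y) {m : ℕ} (hm : N ≤ m)
    (hagree : ∀ j ≤ m, ⌊(2:ℝ) ^ j * x⌋ = ⌊(2:ℝ) ^ j * x'⌋)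
    (hdig : ¬ (dig m x ↔ dig m x')) :
    Branch N K x m := by
  have hst := states_eq_of_floors hagree m le_rfl
  have hCeq : CD N K m x = CD N K m x' := by unfold CD; rw [hst.2]
  have hR : RR (sD (m+1) x) (CD N K (m+1) x) := realized hK (by omega) hx.1 hx.2
  have hR' : RR (sD (m+1) x') (CD N K (m+1) x') := realized hK (by omega) hx'.1 hx'.2
  have hCs := CD_succ (K := K) (x := x) hm
  have hCs' := CD_succ (K := K) (x := x') hm
  have hss := sD_succ m x
  have hss' := sD_succ m x'
  constructor
  · by_cases hd : dig m x
    · rw [hss, hCs, if_pos hd, if_pos hd] at hR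
      simpa using hR
    · have hd' : dig m x' := by tauto
      rw [hss', hCs', if_pos hd', if_pos hd'] at hR'
      rw [hst.1, hCeq]
      simpa using hR'
  · by_cases hd : dig m x
    · have hd' : ¬ dig m x' := by tauto
      rw [hss', hCs', if_neg hd', if_neg hd'] at hR'
      rw [hst.1, hCeq]
      have e1 : sD m x' + (-1 : ℤ) = sD m x' - 1 := by ring
      have e2 : 2 * CD N K m x' - (sD m x' + 1) = 2 * CD N K m x' - sD m x' - 1 := by ring
      rwa [e1, e2] at hR'
    · rw [hss, hCs, if_neg hd, if_neg hd] at hR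
      have e1 : sD m x + (-1 : ℤ) = sD m x - 1 := by ring
      have e2 : 2 * CD N K m x - (sD m x + 1) = 2 * CD N K m x - sD m x - 1 := by ring
      rwa [e1, e2] at hR

end Level3

section Level4

variable {y : ℝ} {N : ℕ} {K : ℤ}

lemma subsingleton_A (hK : (K : ℝ) = 2 ^ N * y) {n : ℕ} (hn : N ≤ n) (g : Fin (n+1) → ℤ) :
    Set.Subsingleton {x | x ∈ Pset y ∧ (∀ m, n ≤ m → ¬ Branch N K x m) ∧
      ∀ j : Fin (n+1), ⌊(2:ℝ) ^ (j:ℕ) * x⌋ = g j} := by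
  intro x hx x' hx'
  by_contra hne
  have hagree : ∀ j ≤ n, ⌊(2:ℝ) ^ j * x⌋ = ⌊(2:ℝ) ^ j * x'⌋ := by
    intro j hj
    rw [hx.2.2 ⟨j, by omega⟩, hx'.2.2 ⟨j, by omega⟩]
  obtain ⟨m, hm, hagree', hdig⟩ := first_diff hne hagree
  exact hx.2.1 m hm (branch_at_diff hK hx.1 hx'.1 (by omega) hagree' hdig)

lemma exit_taker (hK : (K : ℝ) = 2 ^ N * y) {x x' : ℝ}
    (hx : x ∈ Pset y) (hx' : x' ∈ Pset y) {m : ℕ} (hm : N ≤ m)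
    (hagree : ∀ j ≤ m, ⌊(2:ℝ) ^ j * x⌋ = ⌊(2:ℝ) ^ j * x'⌋)
    (hdig : ¬ (dig m x ↔ dig m x')) :
    (∀ m', m + 1 ≤ m' → ¬ Branch N K x m') ∨ (∀ m', m + 1 ≤ m' → ¬ Branch N K x' m') := by
  have hst := states_eq_of_floors hagree m le_rfl
  have hCeq : CD N K m x = CD N K m x' := by unfold CD; rw [hst.2]
  have hB := branch_at_diff hK hx hx' hm hagree hdig
  have hRm := realized hK hm hx.1 hx.2
  set S := sD m x with hS
  set C := CD N K m x with hC
  have hcase : (1 ≤ S ∧ 2 * C = S + 1) ∨ (S = -1 ∧ C = 0) := by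
    unfold Branch at hB
    unfold RR at hB hRm
    omega
  have keyx : ¬ dig m x → sD (m+1) x = S - 1 ∧ CD N K (m+1) x = 2*C - S - 1 := by
    intro hd
    rw [sD_succ, CD_succ (K := K) hm, if_neg hd, if_neg hd]
    constructor <;> ring
  have keyx' : ¬ dig m x' → sD (m+1) x' = S - 1 ∧ CD N K (m+1) x' = 2*C - S - 1 := by
    intro hd
    rw [sD_succ, CD_succ (K := K) hm, if_neg hd, if_neg hd, ← hst.1, ← hCeq]
    constructor <;> ring
  have keyxp : dig m x → sD (m+1) x = S + 1 ∧ CD N K (m+1) x = 2*C := by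
    intro hd
    rw [sD_succ, CD_succ (K := K) hm, if_pos hd, if_pos hd]
    constructor <;> ring
  have keyx'p : dig m x' → sD (m+1) x' = S + 1 ∧ CD N K (m+1) x' = 2*C := by
    intro hd
    rw [sD_succ, CD_succ (K := K) hm, if_pos hd, if_pos hd, ← hst.1, ← hCeq]
    constructor <;> ring
  rcases hcase with ⟨h1, h2⟩ | ⟨h1, h2⟩
  · -- positive branch : the digit-1 taker exits
    by_cases hd : dig m x
    · have hd' : ¬ dig m x' := by tauto
      obtain ⟨e1, e2⟩ := keyx' hd'
      right
      exact exit_noBranch hK hx' (by omega) (by omega) (by omega)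
    · obtain ⟨e1, e2⟩ := keyx hd
      left
      exact exit_noBranch hK hx (by omega) (by omega) (by omega)
  · -- negative branch : the digit-0 taker exits
    by_cases hd : dig m x
    · obtain ⟨e1, e2⟩ := keyxp hd
      left
      exact exit_noBranch hK hx (by omega) (by omega) (by omega)
    · have hd' : dig m x' := by tauto
      obtain ⟨e1, e2⟩ := keyx'p hd'
      right
      exact exit_noBranch hK hx' (by omega) (by omega) (by omega)

lemma subsingleton_B (hK : (K : ℝ) = 2 ^ N * y) (g : Fin (N+1) → ℤ) :
    Set.Subsingleton {x | x ∈ Pset y ∧ (∀ n, N ≤ n → ∃ m, n ≤ m ∧ Branch N K x m) ∧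
      ∀ j : Fin (N+1), ⌊(2:ℝ) ^ (j:ℕ) * x⌋ = g j} := by
  intro x hx x' hx'
  by_contra hne
  have hagree : ∀ j ≤ N, ⌊(2:ℝ) ^ j * x⌋ = ⌊(2:ℝ) ^ j * x'⌋ := by
    intro j hj
    rw [hx.2.2 ⟨j, by omega⟩, hx'.2.2 ⟨j, by omega⟩]
  obtain ⟨m, hm, hagree', hdig⟩ := first_diff hne hagree
  rcases exit_taker hK hx.1 hx'.1 hm hagree' hdig with h | h
  · obtain ⟨m', hm', hB⟩ := hx.2.1 (m+1) (by omega)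
    exact h m' hm' hB
  · obtain ⟨m', hm', hB⟩ := hx'.2.1 (m+1) (by omega)
    exact h m' hm' hB

lemma countable_Pset (hK : (K : ℝ) = 2 ^ N * y) : (Pset y).Countable := by
  classical
  have hsub : Pset y ⊆
      (⋃ (n : ℕ) (g : Fin (n+1) → ℤ), {x | x ∈ Pset y ∧ (N ≤ n ∧ ∀ m, n ≤ m → ¬ Branch N K x m) ∧
        ∀ j : Fin (n+1), ⌊(2:ℝ) ^ (j:ℕ) * x⌋ = g j})
      ∪ (⋃ (g : Fin (N+1) → ℤ), {x | x ∈ Pset y ∧ (∀ n, N ≤ n → ∃ m, n ≤ m ∧ Branch N K x m) ∧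
        ∀ j : Fin (N+1), ⌊(2:ℝ) ^ (j:ℕ) * x⌋ = g j}) := by
    intro x hx
    by_cases h : ∃ n, N ≤ n ∧ ∀ m, n ≤ m → ¬ Branch N K x m
    · obtain ⟨n, hn, hnb⟩ := h
      left
      exact mem_iUnion.mpr ⟨n, mem_iUnion.mpr ⟨fun j => ⌊(2:ℝ) ^ (j:ℕ) * x⌋,
        ⟨hx, ⟨hn, hnb⟩, fun j => rfl⟩⟩⟩
    · right
      push_neg at h
      refine mem_iUnion.mpr ⟨fun j => ⌊(2:ℝ) ^ (j:ℕ) * x⌋, ⟨hx, ?_, fun j => rfl⟩⟩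
      intro n hn
      exact h n hn
  apply Set.Countable.mono hsub
  apply Set.Countable.union
  · apply Set.countable_iUnion
    intro n
    apply Set.countable_iUnion
    intro g
    by_cases hn : N ≤ n
    · apply Set.Subsingleton.countable
      intro a ha b hb
      exact subsingleton_A hK hn g ⟨ha.1, ha.2.1.2, ha.2.2⟩ ⟨hb.1, hb.2.1.2, hb.2.2⟩
    · convert Set.countable_empty
      ext a
      simp only [mem_setOf_eq, mem_empty_iff_false, iff_false]
      rintro ⟨-, ⟨h1, -⟩, -⟩
      exact hn h1
  · apply Set.countable_iUnion
    intro g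
    exact (subsingleton_B hK g).countable

end Level4

theorem stmt14 (y : ℝ) (hy : y ∈ Set.Icc (0:ℝ) (2/3))
    (hdyadic : ∃ (k : ℤ) (n : ℕ), y = (k : ℝ) / 2 ^ n) :
    (L y).Countable := by
  obtain ⟨K, N, hyd⟩ := hdyadic
  have h2 : ((2:ℝ))^N ≠ 0 := by positivity
  have hK : (K : ℝ) = 2 ^ N * y := by
    rw [← (eq_div_iff h2).mp hyd]
    ring
  have hsub : L y ⊆ Pset y ∪ {1} := by
    intro x hx
    rcases eq_or_lt_of_le hx.1.2 with h | h
    · right; simp [h]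
    · left; exact ⟨⟨hx.1.1, h⟩, hx.2⟩
  exact Set.Countable.mono hsub ((countable_Pset hK).union (Set.countable_singleton 1))
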